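/- With the same setup, Cov(U_diff, U'_diff) = (4mn/(N(N−1))) · W̃_3, where U_diff = U_x − U_y for matrix W and U'_diff likewise for W', and W̃_3 = Σ_{i,j,r} W_{ij}W'_{ir} − W_1 W'_1 / N. -/

import Mathlib

open Finset
open Equiv Nat

/-- Expectation under the uniform distribution on permutations of `Fin N`. -/
noncomputable def pE {N : ℕ} (f : Equiv.Perm (Fin N) → ℝ) : ℝ :=
  (∑ π : Equiv.Perm (Fin N), f π) / (Fintype.card (Equiv.Perm (Fin N)) : ℝ)

/-- Covariance under the uniform distribution on permutations of `Fin N`. -/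
noncomputable def pCov {N : ℕ} (f g : Equiv.Perm (Fin N) → ℝ) : ℝ :=
  pE (fun π => (f π - pE f) * (g π - pE g))

/-- Within-first-group sum: sums `W i j` over pairs both assigned to the first `m` labels. -/
noncomputable def Ux {N : ℕ} (W : Matrix (Fin N) (Fin N) ℝ) (m : ℕ)
    (π : Equiv.Perm (Fin N)) : ℝ :=
  ∑ i, ∑ j, if (π i : ℕ) < m ∧ (π j : ℕ) < m then W i j else 0

/-- Within-second-group sum: sums `W i j` over pairs both assigned to labels `> m`. -/
noncomputable def Uy {N : ℕ} (W : Matrix (Fin N) (Fin N) ℝ) (m : ℕ)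
    (π : Equiv.Perm (Fin N)) : ℝ :=
  ∑ i, ∑ j, if m ≤ (π i : ℕ) ∧ m ≤ (π j : ℕ) then W i j else 0


lemma card_perm_ne {N : ℕ} : (Fintype.card (Perm (Fin N)) : ℝ) ≠ 0 := by
  rw [Fintype.card_perm, Fintype.card_fin]
  exact_mod_cast (Nat.factorial_pos N).ne'

lemma pE_comb3 {N : ℕ} (f g h : Perm (Fin N) → ℝ) (a b c d : ℝ) :
    pE (fun π => a * f π + b * g π + c * h π + d)
      = a * pE f + b * pE g + c * pE h + d := by
  unfold pE
  rw [Finset.sum_add_distrib, Finset.sum_add_distrib, Finset.sum_add_distrib,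
    ← Finset.mul_sum, ← Finset.mul_sum, ← Finset.mul_sum, Finset.sum_const,
    Finset.card_univ, nsmul_eq_mul]
  have hc := card_perm_ne (N := N)
  field_simp

lemma pE_affine {N : ℕ} (f : Perm (Fin N) → ℝ) (a d : ℝ) :
    pE (fun π => a * f π + d) = a * pE f + d := by
  have := pE_comb3 f f f a 0 0 d
  simpa using this

lemma pE_sum {N : ℕ} {ι : Type*} (s : Finset ι) (F : ι → Perm (Fin N) → ℝ) :
    pE (fun π => ∑ i ∈ s, F i π) = ∑ i ∈ s, pE (F i) := by
  unfold pE
  rw [Finset.sum_comm, Finset.sum_div]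

lemma pE_const_mul {N : ℕ} (f : Perm (Fin N) → ℝ) (c : ℝ) :
    pE (fun π => c * f π) = c * pE f := by
  unfold pE
  rw [← Finset.mul_sum, mul_div_assoc]

lemma pCov_eq {N : ℕ} (f g : Perm (Fin N) → ℝ) :
    pCov f g = pE (fun π => f π * g π) - pE f * pE g := by
  unfold pCov
  have : (fun π => (f π - pE f) * (g π - pE g))
      = fun π => 1 * (f π * g π) + (- pE g) * f π + (- pE f) * g π + pE f * pE g := by
    funext π; ring
  rw [this, pE_comb3 (fun π => f π * g π) f g 1 (- pE g) (- pE f) (pE f * pE g)]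
  ring

lemma sum_perm_eval_zero {M : ℕ} (f : Fin (M+1) → ℝ) :
    ∑ π : Perm (Fin (M+1)), f (π 0) = (M ! : ℝ) * ∑ k, f k := by
  rw [← Equiv.sum_comp Equiv.Perm.decomposeFin.symm (fun π => f (π 0))]
  simp [Fintype.sum_prod_type, Equiv.Perm.decomposeFin_symm_apply_zero, Fintype.card_perm]
  rw [Finset.mul_sum]

lemma sum_perm_eval {M : ℕ} (i : Fin (M+1)) (f : Fin (M+1) → ℝ) :
    ∑ π : Perm (Fin (M+1)), f (π i) = (M ! : ℝ) * ∑ k, f k := by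
  have h := Equiv.sum_comp (Equiv.mulRight (Equiv.swap (0 : Fin (M+1)) i))
      (fun π : Perm (Fin (M+1)) => f (π i))
  rw [← h]
  simp only [Equiv.coe_mulRight, Equiv.Perm.mul_apply, Equiv.swap_apply_right]
  exact sum_perm_eval_zero f

lemma sum_succ_swap {M : ℕ} (p : Fin (M+2)) (g : Fin (M+2) → ℝ) :
    ∑ q : Fin (M+1), g (Equiv.swap 0 p q.succ) = ∑ l ∈ univ.erase p, g l := by
  have h1 := Fin.sum_univ_succ (fun x => g (Equiv.swap 0 p x))
  have h2 := Equiv.sum_comp (Equiv.swap (0 : Fin (M+2)) p) g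
  have h3 : ∑ l ∈ univ.erase p, g l = (∑ x : Fin (M+2), g x) - g p :=
    Finset.sum_erase_eq_sub (mem_univ p)
  simp only [Equiv.swap_apply_left] at h1
  rw [h3, ← h2, h1]
  ring

lemma sum_perm_eval_pair {M : ℕ} (i j : Fin (M+2)) (hij : i ≠ j)
    (f : Fin (M+2) → Fin (M+2) → ℝ) :
    ∑ π : Perm (Fin (M+2)), f (π i) (π j)
      = (M ! : ℝ) * ∑ p, ∑ l ∈ univ.erase p, f p l := by
  obtain ⟨τ, h0, h1⟩ : ∃ τ : Perm (Fin (M+2)), τ i = 0 ∧ τ j = 1 := by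
    refine ⟨(Equiv.swap ((Equiv.swap i 0) j) 1) * (Equiv.swap i 0), ?_, ?_⟩
    · simp only [Equiv.Perm.mul_apply, Equiv.swap_apply_left]
      apply Equiv.swap_apply_of_ne_of_ne
      · intro h
        exact hij (by simpa using (Equiv.swap i 0).injective (h.symm.trans (Equiv.swap_apply_left i 0).symm) |>.symm)
      · exact zero_ne_one
    · simp only [Equiv.Perm.mul_apply, Equiv.swap_apply_left]
  have key := Equiv.sum_comp (Equiv.mulRight τ)
      (fun π : Perm (Fin (M+2)) => f (π i) (π j))
  rw [← key]
  simp only [Equiv.coe_mulRight, Equiv.Perm.mul_apply, h0, h1]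
  rw [← Equiv.sum_comp Equiv.Perm.decomposeFin.symm
      (fun π : Perm (Fin (M+2)) => f (π 0) (π 1))]
  simp only [Fintype.sum_prod_type, Equiv.Perm.decomposeFin_symm_apply_zero,
    Equiv.Perm.decomposeFin_symm_apply_one]
  have step : ∀ p : Fin (M+2),
      ∑ e : Perm (Fin (M+1)), f p (Equiv.swap 0 p ((e 0).succ))
        = (M ! : ℝ) * ∑ l ∈ univ.erase p, f p l := by
    intro p
    rw [sum_perm_eval (0 : Fin (M+1)) (fun q => f p (Equiv.swap 0 p q.succ))]
    rw [sum_succ_swap p (fun l => f p l)]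
  rw [Finset.mul_sum]
  exact Finset.sum_congr rfl fun p _ => step p

lemma count_ind {M m : ℕ} (hm : m ≤ M + 2) :
    ∑ k : Fin (M+2), (if (k : ℕ) < m then (1:ℝ) else 0) = m := by
  rw [Fin.sum_univ_eq_sum_range (fun t => if t < m then (1:ℝ) else 0)]
  rw [← Finset.sum_subset (Finset.range_subset_range.2 hm)
    (by intro x _ hx; simp only [Finset.mem_range, not_lt] at hx; simp [Nat.not_lt.2 hx])]
  rw [Finset.sum_congr rfl (fun x hx => if_pos (Finset.mem_range.1 hx))]
  simp

lemma pE_eps {M m : ℕ} (hm : m ≤ M+2) (i : Fin (M+2)) :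
    pE (fun π => if (π i : ℕ) < m then (1:ℝ) else 0) = (m:ℝ) / ((M:ℝ)+2) := by
  unfold pE
  rw [sum_perm_eval (M := M+1) i (fun k => if (k:ℕ) < m then (1:ℝ) else 0), count_ind hm]
  have hcard : (Fintype.card (Perm (Fin (M+2))) : ℝ) = (((M:ℝ)+2)) * (((M+1)! : ℕ) : ℝ) := by
    rw [Fintype.card_perm, Fintype.card_fin]
    push_cast [Nat.factorial_succ (M+1)]
    ring
  rw [hcard]
  have hF : (((M+1)! : ℕ) : ℝ) ≠ 0 := by exact_mod_cast (Nat.factorial_pos (M+1)).ne'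
  field_simp

lemma pE_eps_pair {M m : ℕ} (hm : m ≤ M+2) (i j : Fin (M+2)) (hij : i ≠ j) :
    pE (fun π => (if (π i : ℕ) < m then (1:ℝ) else 0) * (if (π j : ℕ) < m then (1:ℝ) else 0))
      = ((m:ℝ) * ((m:ℝ) - 1)) / ((((M:ℝ)+2)) * (((M:ℝ)+1))) := by
  unfold pE
  rw [sum_perm_eval_pair i j hij
    (fun p l => (if (p:ℕ) < m then (1:ℝ) else 0) * (if (l:ℕ) < m then (1:ℝ) else 0))]
  have inner : ∀ p : Fin (M+2),
      ∑ l ∈ univ.erase p, (if (p:ℕ) < m then (1:ℝ) else 0) * (if (l:ℕ) < m then (1:ℝ) else 0)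
        = (if (p:ℕ) < m then (1:ℝ) else 0) * ((m:ℝ) - (if (p:ℕ) < m then (1:ℝ) else 0)) := by
    intro p
    rw [← Finset.mul_sum, Finset.sum_erase_eq_sub (mem_univ p),
      count_ind (M := M) (m := m) hm]
  rw [Finset.sum_congr rfl (fun p _ => inner p)]
  have hsq : ∑ p : Fin (M+2),
      (if (p:ℕ) < m then (1:ℝ) else 0) * ((m:ℝ) - (if (p:ℕ) < m then (1:ℝ) else 0))
      = ∑ p : Fin (M+2),
      ((if (p:ℕ) < m then (1:ℝ) else 0) * (m:ℝ) - (if (p:ℕ) < m then (1:ℝ) else 0)) := by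
    apply Finset.sum_congr rfl; intro p _; by_cases h : (p:ℕ) < m <;> simp [h]
  rw [hsq, Finset.sum_sub_distrib, ← Finset.sum_mul, count_ind hm]
  have hcard : (Fintype.card (Perm (Fin (M+2))) : ℝ)
      = ((((M:ℝ)+2)) * (((M:ℝ)+1))) * (((M)! : ℕ) : ℝ) := by
    rw [Fintype.card_perm, Fintype.card_fin]
    push_cast [Nat.factorial_succ]
    ring
  rw [hcard]
  have hF : (((M)! : ℕ) : ℝ) ≠ 0 := by exact_mod_cast (Nat.factorial_pos M).ne'
  have h2 : ((M:ℝ)+2) ≠ 0 := by positivity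
  have h1 : ((M:ℝ)+1) ≠ 0 := by positivity
  field_simp

theorem stmt_6 (m n N : ℕ) (hm : 2 ≤ m) (hn : 2 ≤ n) (hN : N = m + n)
    (W W' : Matrix (Fin N) (Fin N) ℝ)
    (hsym : W.IsSymm) (hdiag : ∀ i, W i i = 0)
    (hsym' : W'.IsSymm) (hdiag' : ∀ i, W' i i = 0) :
    pCov (fun π => Ux W m π - Uy W m π) (fun π => Ux W' m π - Uy W' m π) =
      (4 * (m : ℝ) * (n : ℝ) / ((N : ℝ) * ((N : ℝ) - 1))) *
        ((∑ i, ∑ j, ∑ r, W i j * W' i r)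
          - (∑ i, ∑ j, W i j) * (∑ i, ∑ j, W' i j) / (N : ℝ)) := by
  obtain ⟨M, rfl⟩ : ∃ M, N = M + 2 := ⟨N - 2, by omega⟩
  have hmle : m ≤ M + 2 := by omega
  -- abbreviation for the indicator
  have hdec : ∀ (V : Matrix (Fin (M+2)) (Fin (M+2)) ℝ), V.IsSymm →
      ∀ π : Perm (Fin (M+2)), Ux V m π - Uy V m π
        = 2 * (∑ i, (∑ j, V i j) * (if (π i : ℕ) < m then (1:ℝ) else 0))
          - (∑ i, ∑ j, V i j) := by
    intro V hV π
    unfold Ux Uy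
    rw [← Finset.sum_sub_distrib]
    simp_rw [← Finset.sum_sub_distrib]
    have step : ∀ i j : Fin (M+2),
        ((if (π i : ℕ) < m ∧ (π j : ℕ) < m then V i j else 0)
          - (if m ≤ (π i : ℕ) ∧ m ≤ (π j : ℕ) then V i j else 0))
        = V i j * ((if (π i : ℕ) < m then (1:ℝ) else 0)
            + (if (π j : ℕ) < m then (1:ℝ) else 0) - 1) := by
      intro i j
      by_cases h1 : (π i : ℕ) < m <;> by_cases h2 : (π j : ℕ) < m <;>
        simp [h1, h2, ← Nat.not_lt]
    rw [Finset.sum_congr rfl (fun i _ => Finset.sum_congr rfl (fun j _ => step i j))]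
    have key : ∑ i, ∑ j, V i j * ((if (π i : ℕ) < m then (1:ℝ) else 0)
            + (if (π j : ℕ) < m then (1:ℝ) else 0) - 1)
        = (∑ i, (∑ j, V i j) * (if (π i : ℕ) < m then (1:ℝ) else 0))
          + (∑ i, ∑ j, V i j * (if (π j : ℕ) < m then (1:ℝ) else 0))
          - ∑ i, ∑ j, V i j := by
      simp_rw [mul_sub, mul_add, mul_one, Finset.sum_sub_distrib,
        Finset.sum_add_distrib, ← Finset.sum_mul]
    have swap2 : ∑ i, ∑ j, V i j * (if (π j : ℕ) < m then (1:ℝ) else 0)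
        = ∑ i, (∑ j, V i j) * (if (π i : ℕ) < m then (1:ℝ) else 0) := by
      rw [Finset.sum_comm]
      refine Finset.sum_congr rfl fun j _ => ?_
      rw [← Finset.sum_mul]
      congr 1
      refine Finset.sum_congr rfl fun i _ => ?_
      exact (hV.apply i j).symm ▸ rfl
    rw [key, swap2]; ring
  have hdiagE : ∀ i : Fin (M+2),
      pE (fun π : Perm (Fin (M+2)) => (if (π i : ℕ) < m then (1:ℝ) else 0)
        * (if (π i : ℕ) < m then (1:ℝ) else 0)) = (m:ℝ)/((M:ℝ)+2) := by
    intro i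
    have h : (fun π : Perm (Fin (M+2)) => (if (π i : ℕ) < m then (1:ℝ) else 0)
        * (if (π i : ℕ) < m then (1:ℝ) else 0))
        = fun π => (if (π i : ℕ) < m then (1:ℝ) else 0) := by
      funext π; by_cases h : (π i : ℕ) < m <;> simp [h]
    rw [h, pE_eps hmle i]
  -- expectation of the linear statistic
  have hES : ∀ (V : Matrix (Fin (M+2)) (Fin (M+2)) ℝ),
      pE (fun π : Perm (Fin (M+2)) =>
        ∑ i, (∑ j, V i j) * (if (π i : ℕ) < m then (1:ℝ) else 0))
      = (m:ℝ)/((M:ℝ)+2) * ∑ i, ∑ j, V i j := by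
    intro V
    rw [pE_sum univ (fun i (π : Perm (Fin (M+2))) =>
      (∑ j, V i j) * (if (π i : ℕ) < m then (1:ℝ) else 0))]
    rw [Finset.sum_congr rfl (fun i _ => by
      rw [pE_const_mul (fun π : Perm (Fin (M+2)) =>
        (if (π i : ℕ) < m then (1:ℝ) else 0)) (∑ j, V i j), pE_eps hmle i])]
    rw [← Finset.sum_mul, mul_comm]
  -- pairwise indicator expectations
  have hE : ∀ i j : Fin (M+2),
      pE (fun π : Perm (Fin (M+2)) => (if (π i : ℕ) < m then (1:ℝ) else 0)
        * (if (π j : ℕ) < m then (1:ℝ) else 0))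
      = if j = i then (m:ℝ)/((M:ℝ)+2)
        else ((m:ℝ) * ((m:ℝ) - 1)) / ((((M:ℝ)+2)) * (((M:ℝ)+1))) := by
    intro i j
    by_cases h : j = i
    · subst h; rw [if_pos rfl]; exact hdiagE j
    · rw [if_neg h, pE_eps_pair hmle i j (fun hh => h hh.symm)]
  -- expectation of the product of linear statistics
  have hprod : pE (fun π : Perm (Fin (M+2)) =>
        (∑ i, (∑ j, W i j) * (if (π i : ℕ) < m then (1:ℝ) else 0))
        * (∑ i, (∑ j, W' i j) * (if (π i : ℕ) < m then (1:ℝ) else 0)))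
      = (m:ℝ)/((M:ℝ)+2) * (∑ i, (∑ j, W i j) * (∑ j, W' i j))
        + ((m:ℝ) * ((m:ℝ) - 1)) / ((((M:ℝ)+2)) * (((M:ℝ)+1)))
          * ((∑ i, ∑ j, W i j) * (∑ i, ∑ j, W' i j)
            - ∑ i, (∑ j, W i j) * (∑ j, W' i j)) := by
    have hmul : (fun π : Perm (Fin (M+2)) =>
        (∑ i, (∑ j, W i j) * (if (π i : ℕ) < m then (1:ℝ) else 0))
        * (∑ i, (∑ j, W' i j) * (if (π i : ℕ) < m then (1:ℝ) else 0)))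
        = fun π => ∑ i, ∑ j, ((∑ r, W i r) * (∑ r, W' j r))
            * ((if (π i : ℕ) < m then (1:ℝ) else 0)
              * (if (π j : ℕ) < m then (1:ℝ) else 0)) := by
      funext π
      rw [Finset.sum_mul_sum]
      exact Finset.sum_congr rfl fun i _ => Finset.sum_congr rfl fun j _ => by ring
    rw [hmul]
    rw [pE_sum univ (fun i (π : Perm (Fin (M+2))) => ∑ j, ((∑ r, W i r) * (∑ r, W' j r))
            * ((if (π i : ℕ) < m then (1:ℝ) else 0)
              * (if (π j : ℕ) < m then (1:ℝ) else 0)))]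
    have inner : ∀ i : Fin (M+2),
        pE (fun π : Perm (Fin (M+2)) => ∑ j, ((∑ r, W i r) * (∑ r, W' j r))
            * ((if (π i : ℕ) < m then (1:ℝ) else 0)
              * (if (π j : ℕ) < m then (1:ℝ) else 0)))
        = (((m:ℝ) * ((m:ℝ) - 1)) / ((((M:ℝ)+2)) * (((M:ℝ)+1))))
            * ((∑ r, W i r) * (∑ p, ∑ r, W' p r))
          + ((m:ℝ)/((M:ℝ)+2)
              - ((m:ℝ) * ((m:ℝ) - 1)) / ((((M:ℝ)+2)) * (((M:ℝ)+1))))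
            * ((∑ r, W i r) * (∑ r, W' i r)) := by
      intro i
      rw [pE_sum univ (fun j (π : Perm (Fin (M+2))) => ((∑ r, W i r) * (∑ r, W' j r))
            * ((if (π i : ℕ) < m then (1:ℝ) else 0)
              * (if (π j : ℕ) < m then (1:ℝ) else 0)))]
      rw [Finset.sum_congr rfl (fun j _ => by
        rw [pE_const_mul (fun π : Perm (Fin (M+2)) =>
          (if (π i : ℕ) < m then (1:ℝ) else 0)
            * (if (π j : ℕ) < m then (1:ℝ) else 0)) _, hE i j])]
      have split : ∀ j : Fin (M+2),
          ((∑ r, W i r) * (∑ r, W' j r))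
            * (if j = i then (m:ℝ)/((M:ℝ)+2)
              else ((m:ℝ) * ((m:ℝ) - 1)) / ((((M:ℝ)+2)) * (((M:ℝ)+1))))
          = (((m:ℝ) * ((m:ℝ) - 1)) / ((((M:ℝ)+2)) * (((M:ℝ)+1))))
              * ((∑ r, W i r) * (∑ r, W' j r))
            + (if j = i then ((m:ℝ)/((M:ℝ)+2)
                - ((m:ℝ) * ((m:ℝ) - 1)) / ((((M:ℝ)+2)) * (((M:ℝ)+1))))
                * ((∑ r, W i r) * (∑ r, W' j r)) else 0) := by
        intro j
        by_cases h : j = i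
        · rw [if_pos h, if_pos h]; ring
        · rw [if_neg h, if_neg h]; ring
      rw [Finset.sum_congr rfl (fun j _ => split j)]
      rw [Finset.sum_add_distrib, ← Finset.mul_sum, Finset.sum_ite_eq' univ i]
      simp only [mem_univ, if_true]
      rw [← Finset.mul_sum]
    rw [Finset.sum_congr rfl (fun i _ => inner i)]
    rw [Finset.sum_add_distrib, ← Finset.mul_sum, ← Finset.mul_sum,
      ← Finset.sum_mul]
    ring
  -- assemble
  rw [pCov_eq]
  have hU : (fun π : Perm (Fin (M+2)) => Ux W m π - Uy W m π)
      = fun π => 2 * (∑ i, (∑ j, W i j) * (if (π i : ℕ) < m then (1:ℝ) else 0))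
          + (-(∑ i, ∑ j, W i j)) := by
    funext π; rw [hdec W hsym π]; ring
  have hU' : (fun π : Perm (Fin (M+2)) => Ux W' m π - Uy W' m π)
      = fun π => 2 * (∑ i, (∑ j, W' i j) * (if (π i : ℕ) < m then (1:ℝ) else 0))
          + (-(∑ i, ∑ j, W' i j)) := by
    funext π; rw [hdec W' hsym' π]; ring
  have hprodfun : (fun π : Perm (Fin (M+2)) =>
      (Ux W m π - Uy W m π) * (Ux W' m π - Uy W' m π))
      = fun π => 4 * ((fun π : Perm (Fin (M+2)) =>
            (∑ i, (∑ j, W i j) * (if (π i : ℕ) < m then (1:ℝ) else 0))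
            * (∑ i, (∑ j, W' i j) * (if (π i : ℕ) < m then (1:ℝ) else 0))) π)
        + (-2 * (∑ i, ∑ j, W' i j)) * ((fun π : Perm (Fin (M+2)) =>
            ∑ i, (∑ j, W i j) * (if (π i : ℕ) < m then (1:ℝ) else 0)) π)
        + (-2 * (∑ i, ∑ j, W i j)) * ((fun π : Perm (Fin (M+2)) =>
            ∑ i, (∑ j, W' i j) * (if (π i : ℕ) < m then (1:ℝ) else 0)) π)
        + (∑ i, ∑ j, W i j) * (∑ i, ∑ j, W' i j) := by
    funext π; rw [hdec W hsym π, hdec W' hsym' π]; ring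
  rw [hprodfun, pE_comb3, hU, hU', pE_affine, pE_affine, hprod, hES W, hES W']
  have hT : (∑ i, ∑ j, ∑ r, W i j * W' i r)
      = ∑ i, (∑ j, W i j) * (∑ r, W' i r) := by
    refine Finset.sum_congr rfl fun i _ => ?_
    rw [Finset.sum_mul_sum]
  rw [hT]
  have hnR : (n:ℝ) = (M:ℝ) + 2 - (m:ℝ) := by
    have : (M:ℝ) + 2 = (m:ℝ) + (n:ℝ) := by exact_mod_cast hN
    linarith
  have hcast : ((M + 2 : ℕ) : ℝ) = (M:ℝ) + 2 := by push_cast; ring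
  rw [hcast, hnR]
  have h2 : ((M:ℝ)+2) ≠ 0 := by positivity
  have h1 : ((M:ℝ)+1) ≠ 0 := by positivity
  have h1' : ((M:ℝ)+2) - 1 ≠ 0 := by
    intro h; apply h1; linarith
  field_simp
  ring
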